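/- The escape time map t(x,ω) = inf{s > 0 : x − sω ∉ G} is continuous on G × S if and only if G is convex. Moreover, when G is convex, for every (x₀,ω₀) ∈ G × S, setting y₀ = x₀ − t(x₀,ω₀)ω₀ ∈ ∂G, one has lim_{(x,ω)→(y₀,ω₀), (x,ω)∈G×S} t(x,ω) = 0. -/

import Mathlib

open MeasureTheory Metric Set Filter
open scoped ENNReal RealInnerProductSpace Topology

noncomputable section

/-- Euclidean three-space ℝ³. -/
abbrev E3 : Type := EuclideanSpace ℝ (Fin 3)

/-- The unit sphere `S ⊂ ℝ³`. -/
def sphS : Set E3 := Metric.sphere (0 : E3) 1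

/-- The escape time `t(x,ω) = inf {s > 0 : x − sω ∉ G}`. -/
def escTime (G : Set E3) (x ω : E3) : ℝ := sInf {s : ℝ | 0 < s ∧ x - s • ω ∉ G}

namespace EscAux

variable {G : Set E3} {x ω : E3}

lemma bdd (G : Set E3) (x ω : E3) : BddBelow {s : ℝ | 0 < s ∧ x - s • ω ∉ G} :=
  ⟨0, fun s hs => hs.1.le⟩

lemma escSet_nonempty (hGb : Bornology.IsBounded G) (hω : ‖ω‖ = 1) (x : E3) :
    {s : ℝ | 0 < s ∧ x - s • ω ∉ G}.Nonempty := by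
  obtain ⟨R, hR⟩ := hGb.subset_closedBall 0
  refine ⟨‖x‖ + |R| + 1, by positivity, fun hmem => ?_⟩
  have h1 : ‖x - (‖x‖ + |R| + 1) • ω‖ ≥ ‖(‖x‖ + |R| + 1) • ω‖ - ‖x‖ := by
    have := norm_sub_norm_le ((‖x‖ + |R| + 1) • ω) x
    rw [norm_sub_rev] at this
    linarith
  have habs : |‖x‖ + |R| + 1| = ‖x‖ + |R| + 1 := abs_of_nonneg (by positivity)
  rw [norm_smul, hω, Real.norm_eq_abs, habs, mul_one] at h1
  have h2 := hR hmem
  rw [Metric.mem_closedBall, dist_zero_right] at h2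
  have : |R| ≥ R := le_abs_self R
  linarith

lemma escTime_nonneg (G : Set E3) (x ω : E3) : 0 ≤ escTime G x ω :=
  Real.sInf_nonneg (fun s hs => hs.1.le)

lemma escTime_le {s : ℝ} (hs : 0 < s) (h : x - s • ω ∉ G) : escTime G x ω ≤ s :=
  csInf_le (bdd G x ω) ⟨hs, h⟩

lemma mem_of_lt_escTime (hx : x ∈ G) {s : ℝ} (h0 : 0 ≤ s) (h : s < escTime G x ω) :
    x - s • ω ∈ G := by
  rcases h0.eq_or_lt with rfl | hpos
  · simpa using hx
  · by_contra hmem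
    exact absurd (escTime_le hpos hmem) (not_le.2 h)

lemma le_escTime (hne : {s : ℝ | 0 < s ∧ x - s • ω ∉ G}.Nonempty) {s : ℝ}
    (h : ∀ u : ℝ, 0 < u → u ≤ s → x - u • ω ∈ G) : s ≤ escTime G x ω := by
  refine le_csInf hne fun u hu => ?_
  by_contra hlt
  exact hu.2 (h u hu.1 (le_of_lt (not_le.1 hlt)))

lemma escTime_pos (hG : IsOpen G) (hx : x ∈ G) (hω : ‖ω‖ = 1)
    (hne : {s : ℝ | 0 < s ∧ x - s • ω ∉ G}.Nonempty) : 0 < escTime G x ω := by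
  obtain ⟨r, hr, hball⟩ := Metric.isOpen_iff.1 hG x hx
  have : r / 2 ≤ escTime G x ω := by
    refine le_escTime hne fun u hu0 hus => hball ?_
    rw [Metric.mem_ball, dist_eq_norm]
    have : ‖x - u • ω - x‖ = u := by
      rw [sub_sub_cancel_left, norm_neg, norm_smul, hω, Real.norm_eq_abs,
        abs_of_pos hu0, mul_one]
    rw [this]; linarith
  linarith

lemma escTime_not_mem (hG : IsOpen G) (hω : ‖ω‖ = 1)
    (hne : {s : ℝ | 0 < s ∧ x - s • ω ∉ G}.Nonempty) :
    x - escTime G x ω • ω ∉ G := by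
  intro hmem
  set T := escTime G x ω with hT
  obtain ⟨ε, hε, hball⟩ := Metric.isOpen_iff.1 hG _ hmem
  have key : ∀ u ∈ {s : ℝ | 0 < s ∧ x - s • ω ∉ G}, T + ε ≤ u := by
    intro u hu
    have hTu : T ≤ u := csInf_le (bdd G x ω) hu
    by_contra hlt
    apply hu.2
    apply hball
    rw [Metric.mem_ball, dist_eq_norm]
    have : x - u • ω - (x - T • ω) = (T - u) • ω := by
      rw [sub_smul]; abel
    rw [this, norm_smul, hω, mul_one, Real.norm_eq_abs, abs_sub_comm,
      abs_of_nonneg (by linarith)]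
    linarith [not_le.1 hlt]
  have h2 : T + ε ≤ T := le_csInf hne key
  linarith


/-- The exit point lies in the closure of `G`. -/
lemma exit_mem_closure (hG : IsOpen G) (hx : x ∈ G) (hω : ‖ω‖ = 1)
    (hGb : Bornology.IsBounded G) :
    x - escTime G x ω • ω ∈ closure G := by
  set T := escTime G x ω with hT
  have hTpos : 0 < T := escTime_pos hG hx hω (escSet_nonempty hGb hω x)
  have hcont : Tendsto (fun u : ℝ => x - u • ω) (𝓝[<] T) (𝓝 (x - T • ω)) := by
    apply Tendsto.mono_left _ nhdsWithin_le_nhds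
    exact ((continuous_const.sub ((continuous_id.smul continuous_const)))).tendsto T
  apply mem_closure_of_tendsto hcont
  have hmem : Set.Ioo 0 T ∈ 𝓝[<] T := Ioo_mem_nhdsLT_of_mem ⟨hTpos, le_rfl⟩
  filter_upwards [hmem] with u hu
  exact mem_of_lt_escTime hx hu.1.le hu.2

/-- Beyond the exit time, points on the ray are outside the closure of a convex `G`. -/
lemma not_mem_closure_of_gt (hG : IsOpen G) (hGb : Bornology.IsBounded G)
    (hconv : Convex ℝ G) (hx : x ∈ G) (hω : ‖ω‖ = 1) {s : ℝ}
    (hs : escTime G x ω < s) : x - s • ω ∉ closure G := by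
  intro hq
  set T := escTime G x ω with hT
  have hne := escSet_nonempty hGb hω x
  have hTpos : 0 < T := escTime_pos hG hx hω hne
  have hspos : 0 < s := hTpos.trans hs
  have hpG : x - T • ω ∉ G := escTime_not_mem hG hω hne
  have hseg : x - T • ω ∈ openSegment ℝ x (x - s • ω) := by
    refine ⟨1 - T / s, T / s, ?_, by positivity, by ring, ?_⟩
    · have : T / s < 1 := (div_lt_one hspos).2 hs
      linarith
    · have hTs : (T / s) * s = T := div_mul_cancel₀ T hspos.ne'
      rw [smul_sub, smul_smul, hTs]
      module
  have := hconv.openSegment_interior_closure_subset_interior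
    (by rwa [hG.interior_eq]) hq hseg
  exact hpG (interior_subset this)


/-- Near `(x,ω)`, the whole initial segment of the ray stays in `G`. -/
lemma eventually_segment_subset (hG : IsOpen G) {s : ℝ} (hs0 : 0 ≤ s)
    (h : ∀ u : ℝ, 0 ≤ u → u ≤ s → x - u • ω ∈ G) :
    ∀ᶠ p : E3 × E3 in 𝓝 (x, ω), ∀ u : ℝ, 0 ≤ u → u ≤ s → p.1 - u • p.2 ∈ G := by
  have hK : IsCompact ((fun u : ℝ => x - u • ω) '' Set.Icc 0 s) :=
    (isCompact_Icc).image (continuous_const.sub (continuous_id.smul continuous_const))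
  have hKG : (fun u : ℝ => x - u • ω) '' Set.Icc 0 s ⊆ G := by
    rintro - ⟨u, hu, rfl⟩
    exact h u hu.1 hu.2
  obtain ⟨δ, hδ, hthick⟩ := hK.exists_cthickening_subset_open hG hKG
  have h1 : ∀ᶠ y in 𝓝 x, dist y x < δ / 2 := by
    filter_upwards [Metric.ball_mem_nhds x (show (0:ℝ) < δ/2 by positivity)] with y hy
    simpa [Metric.mem_ball] using hy
  have h2 : ∀ᶠ y in 𝓝 ω, dist y ω < δ / (2 * (s + 1)) := by
    filter_upwards [Metric.ball_mem_nhds ω (show (0:ℝ) < δ/(2*(s+1)) by positivity)] with y hy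
    simpa [Metric.mem_ball] using hy
  have hev : ∀ᶠ p : E3 × E3 in 𝓝 (x, ω),
      dist p.1 x < δ / 2 ∧ dist p.2 ω < δ / (2 * (s + 1)) :=
    ((continuous_fst.tendsto (x, ω)).eventually h1).and
      ((continuous_snd.tendsto (x, ω)).eventually h2)
  filter_upwards [hev] with p hp u hu0 hus
  apply hthick
  have hd : dist (p.1 - u • p.2) (x - u • ω) ≤ dist p.1 x + u * dist p.2 ω := by
    rw [dist_eq_norm, dist_eq_norm, dist_eq_norm]
    have heq : p.1 - u • p.2 - (x - u • ω) = p.1 - x - u • (p.2 - ω) := by module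
    rw [heq]
    calc ‖p.1 - x - u • (p.2 - ω)‖ ≤ ‖p.1 - x‖ + ‖u • (p.2 - ω)‖ := norm_sub_le _ _
      _ = ‖p.1 - x‖ + u * ‖p.2 - ω‖ := by
          rw [norm_smul, Real.norm_eq_abs, abs_of_nonneg hu0]
  have hc0 : (0:ℝ) ≤ δ / (2 * (s + 1)) := by positivity
  have hsc : s * (δ / (2 * (s + 1))) ≤ δ / 2 := by
    have heq : s * (δ / (2 * (s + 1))) = s * δ / (2 * (s + 1)) := by ring
    rw [heq, div_le_div_iff₀ (by positivity) (by norm_num)]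
    nlinarith [hδ.le, hs0]
  have hu2 : u * dist p.2 ω ≤ s * (δ / (2 * (s + 1))) :=
    mul_le_mul hus hp.2.le dist_nonneg hs0
  have hdist : dist (p.1 - u • p.2) (x - u • ω) ≤ δ := by
    have := hp.1
    linarith
  exact Metric.mem_cthickening_of_dist_le _ _ _ _ ⟨u, ⟨hu0, hus⟩, rfl⟩ hdist


lemma one_lt_rank_E3 : 1 < Module.rank ℝ E3 := by
  rw [← Module.finrank_eq_rank]
  have h3 : Module.finrank ℝ E3 = 3 := finrank_euclideanSpace_fin
  rw [h3]
  norm_cast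

lemma punctured_ball_nonempty (a : E3) {r : ℝ} (hr : 0 < r) :
    (Metric.ball a r \ {a}).Nonempty := by
  refine ⟨a + (r / 2) • EuclideanSpace.single (0 : Fin 3) (1 : ℝ), ?_, ?_⟩
  · rw [Metric.mem_ball, dist_eq_norm, add_sub_cancel_left, norm_smul,
      EuclideanSpace.norm_single, Real.norm_eq_abs, abs_of_pos (by positivity)]
    simp only [norm_one, mul_one]
    linarith
  · simp only [Set.mem_singleton_iff, add_eq_left]
    intro h
    have := congrArg norm h
    rw [norm_smul, EuclideanSpace.norm_single, norm_zero, Real.norm_eq_abs,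
      abs_of_pos (by positivity)] at this
    simp at this
    linarith

lemma isPreconnected_punctured_ball (a : E3) {r : ℝ} (hr : 0 < r) :
    IsPreconnected (Metric.ball a r \ {a}) := by
  have hsph : IsPreconnected (Metric.sphere (0 : E3) 1) :=
    (isPathConnected_sphere one_lt_rank_E3 (0 : E3) zero_le_one).isConnected.isPreconnected
  have hprod : IsPreconnected ((Set.Ioo (0:ℝ) r) ×ˢ Metric.sphere (0 : E3) 1) :=
    isPreconnected_Ioo.prod hsph
  have himage := hprod.image (fun p : ℝ × E3 => a + p.1 • p.2)
    ((continuous_const.add (continuous_fst.smul continuous_snd)).continuousOn)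
  convert himage using 1
  ext y
  constructor
  · rintro ⟨hy, hya⟩
    rw [Set.mem_singleton_iff] at hya
    have hne : y - a ≠ 0 := sub_ne_zero.2 hya
    have ht0 : 0 < ‖y - a‖ := norm_pos_iff.2 hne
    refine ⟨(‖y - a‖, ‖y - a‖⁻¹ • (y - a)), ⟨⟨ht0, ?_⟩, ?_⟩, ?_⟩
    · rwa [Metric.mem_ball, dist_eq_norm] at hy
    · rw [mem_sphere_zero_iff_norm, norm_smul, Real.norm_eq_abs, abs_of_pos (by positivity),
        inv_mul_cancel₀ ht0.ne']
    · simp only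
      rw [smul_inv_smul₀ ht0.ne', add_sub_cancel]
  · rintro ⟨⟨t, v⟩, ⟨⟨ht0, htr⟩, hv⟩, rfl⟩
    rw [mem_sphere_zero_iff_norm] at hv
    constructor
    · rw [Metric.mem_ball, dist_eq_norm, add_sub_cancel_left, norm_smul, hv,
        Real.norm_eq_abs, abs_of_pos ht0, mul_one]
      exact htr
    · simp only [Set.mem_singleton_iff, add_eq_left]
      intro h
      have := congrArg norm h
      rw [norm_smul, hv, norm_zero, Real.norm_eq_abs, abs_of_pos ht0, mul_one] at this
      exact ht0.ne' this

lemma isPreconnected_diff_singleton {U : Set E3} (hU : IsOpen U) (hc : IsPreconnected U)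
    (a : E3) : IsPreconnected (U \ {a}) := by
  by_cases haU : a ∈ U
  swap
  · rwa [Set.diff_singleton_eq_self haU]
  obtain ⟨r, hr, hball⟩ := Metric.isOpen_iff.1 hU a haU
  set P := Metric.ball a r \ {a} with hP
  have hPW : P ⊆ U \ {a} := fun y hy => ⟨hball hy.1, hy.2⟩
  have main : ∀ u v : Set E3, IsOpen u → IsOpen v → (U \ {a}) ⊆ u ∪ v →
      ((U \ {a}) ∩ v).Nonempty → (P ∩ v) = ∅ → ((U \ {a}) ∩ (u ∩ v)).Nonempty := by
    intro u v hu hv hcover hnv hPv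
    have hav : a ∉ v := by
      intro hav
      obtain ⟨r', hr', hball'⟩ := Metric.isOpen_iff.1 hv a hav
      obtain ⟨z, hz⟩ := punctured_ball_nonempty a (lt_min hr hr')
      have hzP : z ∈ P := ⟨Metric.ball_subset_ball (min_le_left r r') hz.1, hz.2⟩
      have hzv : z ∈ v := hball' (Metric.ball_subset_ball (min_le_right r r') hz.1)
      have hzPv : z ∈ P ∩ v := ⟨hzP, hzv⟩
      rw [hPv] at hzPv
      exact hzPv
    obtain ⟨y, hyU, hyuv⟩ := hc (u ∪ Metric.ball a r) v (hu.union Metric.isOpen_ball) hv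
      (fun y hy => by
        by_cases hya : y = a
        · exact Or.inl (Or.inr (hya ▸ Metric.mem_ball_self hr))
        · rcases hcover ⟨hy, hya⟩ with h | h
          · exact Or.inl (Or.inl h)
          · exact Or.inr h)
      (by
        obtain ⟨z, hz⟩ := punctured_ball_nonempty a hr
        exact ⟨z, hball hz.1, Or.inr hz.1⟩)
      (hnv.mono (Set.inter_subset_inter_left v Set.diff_subset))
    have hyv : y ∈ v := hyuv.2
    have hya : y ≠ a := fun h => hav (h ▸ hyv)
    have hyu : y ∈ u := by
      rcases hyuv.1 with h | h
      · exact h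
      · have hyPv : y ∈ P ∩ v := ⟨⟨h, hya⟩, hyv⟩
        rw [hPv] at hyPv
        exact absurd hyPv (Set.notMem_empty y)
    exact ⟨y, ⟨hyU, hya⟩, hyu, hyv⟩
  intro u v hu hv hcover hnu hnv
  by_cases h1 : (P ∩ u).Nonempty
  · by_cases h2 : (P ∩ v).Nonempty
    · have := (isPreconnected_punctured_ball a hr) u v hu hv (hPW.trans hcover) h1 h2
      exact this.mono (Set.inter_subset_inter_left _ hPW)
    · exact main u v hu hv hcover hnv (Set.not_nonempty_iff_eq_empty.1 h2)
  · have := main v u hv hu (fun y hy => (hcover hy).symm) hnu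
      (Set.not_nonempty_iff_eq_empty.1 h1)
    rw [Set.inter_comm v u] at this
    exact this


set_option maxHeartbeats 1000000 in
lemma convex_of_continuousOn (hG : IsOpen G) (hGb : Bornology.IsBounded G)
    (hGc : IsConnected G)
    (hcont : ContinuousOn (fun p : E3 × E3 => escTime G p.1 p.2) (G ×ˢ sphS)) :
    Convex ℝ G := by
  rw [convex_iff_segment_subset]
  intro a ha b hb
  intro z hz
  by_contra hzG
  rw [segment_eq_image'] at hz
  obtain ⟨θ, ⟨hθ0, hθ1⟩, rfl⟩ := hz
  have hzG' : a + θ • (b - a) ∉ G := hzG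
  -- basic setup
  have hba : b - a ≠ 0 := by
    intro h
    rw [sub_eq_zero] at h
    subst h
    exact hzG' (by simpa using ha)
  set L : ℝ := ‖a - b‖ with hL
  have hL0 : 0 < L := by
    rw [hL, norm_sub_rev]
    exact norm_pos_iff.2 hba
  set ω : E3 := L⁻¹ • (a - b) with hω
  have hωn : ‖ω‖ = 1 := by
    rw [hω, norm_smul, Real.norm_eq_abs, abs_of_pos (by positivity), hL,
      inv_mul_cancel₀ (by positivity)]
  have hLω : L • ω = a - b := by rw [hω, smul_inv_smul₀ hL0.ne']
  have hbeq : b = a - L • ω := by rw [hLω]; abel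
  have hθ0' : 0 < θ := by
    rcases hθ0.eq_or_lt with rfl | h
    · exact absurd (by simpa using ha) hzG'
    · exact h
  have hθ1' : θ < 1 := by
    rcases hθ1.eq_or_lt with rfl | h
    · refine absurd ?_ hzG'
      have h1 : a + (1:ℝ) • (b - a) = b := by module
      rwa [h1]
    · exact h
  have hzeq : a + θ • (b - a) = a - (θ * L) • ω := by
    rw [mul_smul, hLω]
    module
  -- the test function
  set W : Set E3 := G \ {a} with hW
  have hWconn : IsPreconnected W := isPreconnected_diff_singleton hG hGc.isPreconnected a
  set f : E3 → ℝ := fun y => escTime G y (‖y - a‖⁻¹ • (y - a)) - ‖y - a‖ with hf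
  have hdirS : ∀ y : E3, y ≠ a → ‖‖y - a‖⁻¹ • (y - a)‖ = 1 := by
    intro y hy
    have h0 : (0:ℝ) < ‖y - a‖ := norm_pos_iff.2 (sub_ne_zero.2 hy)
    rw [norm_smul, Real.norm_eq_abs, abs_of_pos (by positivity), inv_mul_cancel₀ h0.ne']
  have hΦcont : ContinuousOn (fun y : E3 => (y, ‖y - a‖⁻¹ • (y - a))) W := by
    apply ContinuousOn.prodMk continuousOn_id
    exact (((continuous_id.sub continuous_const).norm).continuousOn.inv₀
      (fun y hy => (norm_pos_iff.2 (sub_ne_zero.2 hy.2)).ne')).smul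
      (continuous_id.sub continuous_const).continuousOn
  have hmaps : Set.MapsTo (fun y : E3 => (y, ‖y - a‖⁻¹ • (y - a))) W (G ×ˢ sphS) := by
    intro y hy
    rw [Set.mem_prod]
    exact ⟨hy.1, by
      rw [sphS, mem_sphere_zero_iff_norm]
      exact hdirS y hy.2⟩
  have hcomp := ContinuousOn.comp (g := fun p : E3 × E3 => escTime G p.1 p.2)
    (f := fun y : E3 => (y, ‖y - a‖⁻¹ • (y - a))) hcont hΦcont hmaps
  have hfcont : ContinuousOn f W :=
    hcomp.sub ((continuous_id.sub continuous_const).norm).continuousOn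
  have hfne : ∀ y ∈ W, f y ≠ 0 := by
    intro y hy h0
    have hyne : y ≠ a := hy.2
    have hnorm : (0:ℝ) < ‖y - a‖ := norm_pos_iff.2 (sub_ne_zero.2 hyne)
    have hT : escTime G y (‖y - a‖⁻¹ • (y - a)) = ‖y - a‖ := by
      rw [hf] at h0
      linarith [sub_eq_zero.1 h0]
    have hnot := escTime_not_mem hG (hdirS y hyne)
      (escSet_nonempty hGb (hdirS y hyne) y)
    rw [hT, smul_inv_smul₀ hnorm.ne'] at hnot
    simp only [sub_sub_cancel] at hnot
    exact hnot ha
  -- a point near `a` where `f > 0`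
  obtain ⟨r, hr, hball⟩ := Metric.isOpen_iff.1 hG a ha
  set e : E3 := EuclideanSpace.single (0 : Fin 3) (1 : ℝ) with he
  have hen : ‖e‖ = 1 := by rw [he, EuclideanSpace.norm_single, norm_one]
  set x₁ : E3 := a + (r / 4) • e with hx₁
  have hx₁a : x₁ - a = (r / 4) • e := by rw [hx₁]; abel
  have hx₁n : ‖x₁ - a‖ = r / 4 := by
    rw [hx₁a, norm_smul, hen, Real.norm_eq_abs, abs_of_pos (by positivity), mul_one]
  have hx₁ne : x₁ ≠ a := by
    intro h
    have : ‖x₁ - a‖ = 0 := by rw [h, sub_self, norm_zero]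
    rw [hx₁n] at this
    linarith
  have hx₁G : x₁ ∈ G := by
    apply hball
    rw [Metric.mem_ball, dist_eq_norm, hx₁n]
    linarith
  have hdir₁ : ‖x₁ - a‖⁻¹ • (x₁ - a) = e := by
    rw [hx₁n, hx₁a, smul_smul, inv_mul_cancel₀ (by positivity), one_smul]
  have hfx₁ : 0 < f x₁ := by
    have hlow : r / 2 ≤ escTime G x₁ (‖x₁ - a‖⁻¹ • (x₁ - a)) := by
      apply le_escTime (escSet_nonempty hGb (hdirS x₁ hx₁ne) x₁)
      intro u hu0 hur
      apply hball
      rw [hdir₁, Metric.mem_ball, dist_eq_norm]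
      have : x₁ - u • e - a = (r / 4 - u) • e := by
        rw [hx₁]
        module
      rw [this, norm_smul, hen, Real.norm_eq_abs, mul_one]
      rw [abs_sub_lt_iff]
      constructor <;> linarith
    rw [hf]
    simp only
    rw [hx₁n] at hlow ⊢
    linarith
  -- `f b < 0`
  have hbne : b ≠ a := by
    intro h
    rw [h] at hba
    simp at hba
  have hbn : ‖b - a‖ = L := by
    rw [hbeq]
    have : a - L • ω - a = -(L • ω) := by abel
    rw [this, norm_neg, norm_smul, hωn, Real.norm_eq_abs, abs_of_pos hL0, mul_one]
  have hdirb : ‖b - a‖⁻¹ • (b - a) = -ω := by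
    rw [hbn, hbeq]
    have : a - L • ω - a = -(L • ω) := by abel
    rw [this, smul_neg, smul_smul, inv_mul_cancel₀ hL0.ne', one_smul]
  have hfb : f b < 0 := by
    have hup : escTime G b (‖b - a‖⁻¹ • (b - a)) ≤ (1 - θ) * L := by
      apply escTime_le (by nlinarith)
      rw [hdirb]
      have : b - ((1 - θ) * L) • (-ω) = a - (θ * L) • ω := by
        rw [hbeq]
        have h1 : ((1 - θ) * L) • (-ω) = -(((1 - θ) * L) • ω) := by rw [smul_neg]
        rw [h1]
        have : a - L • ω - -(((1 - θ) * L) • ω) = a - (L - (1 - θ) * L) • ω := by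
          rw [sub_smul]
          abel
        rw [this]
        congr 1
        ring_nf
      rw [this, ← hzeq]
      exact hzG'
    rw [hf]
    simp only
    rw [hbn] at hup ⊢
    nlinarith
  -- intermediate value theorem on `W`
  have hbW : b ∈ W := ⟨hb, hbne⟩
  have hx₁W : x₁ ∈ W := ⟨hx₁G, hx₁ne⟩
  have himg : IsPreconnected (f '' W) := hWconn.image f hfcont
  have hmem : (0:ℝ) ∈ f '' W := by
    have := himg.ordConnected.out (Set.mem_image_of_mem f hbW) (Set.mem_image_of_mem f hx₁W)
    exact this ⟨hfb.le, hfx₁.le⟩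
  obtain ⟨y, hyW, hfy⟩ := hmem
  exact hfne y hyW hfy

end EscAux

open EscAux

/-- For an open bounded connected `G ⊆ ℝ³`, the escape time map
`t(x,ω) = inf{s > 0 : x − sω ∉ G}` is continuous on `G × S` if and only if `G` is convex.
Moreover, when `G` is convex, for every `(x₀,ω₀) ∈ G × S`, setting
`y₀ = x₀ − t(x₀,ω₀)ω₀ ∈ ∂G`, one has `t(x,ω) → 0` as `(x,ω) → (y₀,ω₀)` within `G × S`. -/
theorem escTime_continuousOn_iff_convex
    (G : Set E3) (hG : IsOpen G) (hGb : Bornology.IsBounded G) (hGc : IsConnected G) :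
    (ContinuousOn (fun p : E3 × E3 => escTime G p.1 p.2) (G ×ˢ sphS) ↔ Convex ℝ G) ∧
    (Convex ℝ G → ∀ x₀ ∈ G, ∀ ω₀ ∈ sphS,
      Tendsto (fun p : E3 × E3 => escTime G p.1 p.2)
        (𝓝[G ×ˢ sphS] (x₀ - escTime G x₀ ω₀ • ω₀, ω₀)) (𝓝 (0 : ℝ))) := by
  have hconv_cont : Convex ℝ G →
      ContinuousOn (fun p : E3 × E3 => escTime G p.1 p.2) (G ×ˢ sphS) := by
    intro hconv
    rintro ⟨x, ω⟩ hp
    rw [Set.mem_prod] at hp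
    obtain ⟨hxG, hωS⟩ := hp
    have hω : ‖ω‖ = 1 := by simpa [sphS, mem_sphere_zero_iff_norm] using hωS
    have hne := escSet_nonempty hGb hω x
    set T := escTime G x ω with hT
    have hT0 : 0 < T := escTime_pos hG hxG hω hne
    show Tendsto _ _ (𝓝 (escTime G x ω))
    rw [Metric.tendsto_nhds]
    intro ε hε
    have hq : x - (T + ε / 2) • ω ∉ closure G :=
      not_mem_closure_of_gt hG hGb hconv hxG hω (by rw [← hT]; linarith)
    have hev1 : ∀ᶠ q : E3 × E3 in 𝓝 (x, ω), q.1 - (T + ε / 2) • q.2 ∉ closure G := by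
      have hcont : ContinuousAt (fun q : E3 × E3 => q.1 - (T + ε / 2) • q.2) (x, ω) := by
        fun_prop
      exact hcont.eventually_mem (isClosed_closure.isOpen_compl.mem_nhds hq)
    have hmaxlt : max (T - ε / 2) 0 < T := max_lt (by linarith) hT0
    have hev2 : ∀ᶠ q : E3 × E3 in 𝓝 (x, ω),
        ∀ u : ℝ, 0 ≤ u → u ≤ max (T - ε / 2) 0 → q.1 - u • q.2 ∈ G :=
      eventually_segment_subset hG (le_max_right _ _)
        (fun u hu0 hus => mem_of_lt_escTime hxG hu0 (lt_of_le_of_lt hus hmaxlt))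
    filter_upwards [hev1.filter_mono nhdsWithin_le_nhds,
      hev2.filter_mono nhdsWithin_le_nhds, self_mem_nhdsWithin] with q h1 h2 hqmem
    rw [Set.mem_prod] at hqmem
    have hq2 : ‖q.2‖ = 1 := by simpa [sphS, mem_sphere_zero_iff_norm] using hqmem.2
    have hub : escTime G q.1 q.2 ≤ T + ε / 2 :=
      escTime_le (by linarith) (fun hmem => h1 (subset_closure hmem))
    have hlb : max (T - ε / 2) 0 ≤ escTime G q.1 q.2 :=
      le_escTime (escSet_nonempty hGb hq2 q.1) (fun u hu0 hus => h2 u hu0.le hus)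
    rw [Real.dist_eq, abs_sub_lt_iff]
    have := le_max_left (T - ε / 2) (0 : ℝ)
    constructor <;> linarith
  refine ⟨⟨fun hcont => convex_of_continuousOn hG hGb hGc hcont, hconv_cont⟩, ?_⟩
  · -- the "moreover" statement
    intro hconv x₀ hx₀ ω₀ hω₀S
    have hω₀ : ‖ω₀‖ = 1 := by simpa [sphS, mem_sphere_zero_iff_norm] using hω₀S
    set T := escTime G x₀ ω₀ with hT
    rw [Metric.tendsto_nhds]
    intro ε hε
    have hnot : x₀ - (T + ε / 2) • ω₀ ∉ closure G :=
      not_mem_closure_of_gt hG hGb hconv hx₀ hω₀ (by rw [← hT]; linarith)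
    have heq : (x₀ - T • ω₀) - (ε / 2) • ω₀ = x₀ - (T + ε / 2) • ω₀ := by module
    have hev : ∀ᶠ p : E3 × E3 in 𝓝 (x₀ - T • ω₀, ω₀), p.1 - (ε / 2) • p.2 ∉ closure G := by
      have hcont : ContinuousAt (fun p : E3 × E3 => p.1 - (ε / 2) • p.2) (x₀ - T • ω₀, ω₀) := by
        fun_prop
      have : (x₀ - T • ω₀) - (ε / 2) • ω₀ ∈ (closure G)ᶜ := by rw [heq]; exact hnot
      exact hcont.eventually_mem (isClosed_closure.isOpen_compl.mem_nhds this)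
    filter_upwards [hev.filter_mono nhdsWithin_le_nhds] with p hp
    have hub : escTime G p.1 p.2 ≤ ε / 2 :=
      escTime_le (by linarith) (fun hmem => hp (subset_closure hmem))
    have hlbz := escTime_nonneg G p.1 p.2
    rw [Real.dist_eq, abs_sub_lt_iff]
    constructor <;> linarith
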